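/- Let Γ be an infinite cardinal with uncountable cofinality, let n ∈ ℕ, and let M be a symmetric continuous n-linear form on c₀(Γ) that is weakly sequentially continuous. Then there exists a countable set A ⊆ Γ such that M(e_{γ₁}, …, e_{γₙ}) = 0 whenever {γ₁, …, γₙ} is not contained in A. -/

import Mathlib

open scoped ZeroAtInfty

/-- The canonical unit vector `e γ` in `c₀(Γ)` (for `Γ` discrete). -/
noncomputable def unitVec {Γ : Type*} [TopologicalSpace Γ] [DiscreteTopology Γ] (γ : Γ) :
    C₀(Γ, ℝ) where
  toFun := Set.indicator ({γ} : Set Γ) (fun _ => (1 : ℝ))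
  continuous_toFun := continuous_of_discreteTopology
  zero_at_infty' := by
    rw [Filter.cocompact_eq_cofinite]
    have h : {x : Γ | Set.indicator ({γ} : Set Γ) (fun _ => (1 : ℝ)) x ≠ 0}.Finite :=
      (Set.finite_singleton γ).subset fun x hx => by
        by_contra hxγ
        exact hx (Set.indicator_of_notMem hxγ _)
    have h' : ∀ᶠ x in Filter.cofinite,
        Set.indicator ({γ} : Set Γ) (fun _ => (1 : ℝ)) x = 0 :=
      Filter.eventually_cofinite.2 h
    exact Filter.Tendsto.congr' (h'.mono fun x hx => hx.symm) tendsto_const_nhds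

lemma unitVec_apply {Γ : Type*} [TopologicalSpace Γ] [DiscreteTopology Γ] (γ x : Γ)
    [Decidable (x = γ)] :
    unitVec γ x = if x = γ then (1 : ℝ) else 0 := by
  have hcoe : unitVec γ x = Set.indicator ({γ} : Set Γ) (fun _ => (1 : ℝ)) x := rfl
  rw [hcoe]
  by_cases h : x = γ
  · subst h
    rw [if_pos rfl]
    exact Set.indicator_of_mem (Set.mem_singleton x) fun _ => (1 : ℝ)
  · rw [if_neg h]
    exact Set.indicator_of_notMem (by simpa using h) fun _ => (1 : ℝ)

lemma c0_sum_apply {Γ : Type*} [TopologicalSpace Γ] [DiscreteTopology Γ]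
    {ι : Type*} (s : Finset ι) (f : ι → C₀(Γ, ℝ)) (x : Γ) :
    (∑ i ∈ s, f i) x = ∑ i ∈ s, f i x := by
  classical
  induction s using Finset.induction_on with
  | empty => simp
  | insert a s h ih => simp [Finset.sum_insert h, ih]

/-- For a continuous linear functional `φ` on `c₀`, the set of `δ` with `φ (e δ) ≥ ε` is
finite. -/
lemma finite_ge_clm_unitVec {Γ : Type*} [TopologicalSpace Γ] [DiscreteTopology Γ]
    (φ : C₀(Γ, ℝ) →L[ℝ] ℝ) {ε : ℝ} (hε : 0 < ε) :
    {δ : Γ | ε ≤ φ (unitVec δ)}.Finite := by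
  classical
  by_contra hinf
  replace hinf : {δ : Γ | ε ≤ φ (unitVec δ)}.Infinite := hinf
  obtain ⟨N, hN⟩ := exists_nat_gt (‖φ‖ / ε)
  obtain ⟨s, hs, hcard⟩ := hinf.exists_subset_card_eq N
  set x : C₀(Γ, ℝ) := ∑ δ ∈ s, unitVec δ with hx
  have hxval : ∀ g : Γ, x g = if g ∈ s then (1 : ℝ) else 0 := by
    intro g
    rw [hx, c0_sum_apply]
    simp only [unitVec_apply]
    rw [Finset.sum_ite_eq s g (fun _ => (1 : ℝ))]
  have hxnorm : ‖x‖ ≤ 1 := by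
    rw [← ZeroAtInftyContinuousMap.norm_toBCF_eq_norm]
    rw [BoundedContinuousFunction.norm_le zero_le_one]
    intro g
    have : x.toBCF g = x g := rfl
    rw [this, hxval g]
    split <;> simp
  have h1 : (N : ℝ) * ε ≤ φ x := by
    rw [hx, map_sum]
    calc (N : ℝ) * ε = ∑ _δ ∈ s, ε := by rw [Finset.sum_const, hcard, nsmul_eq_mul]
    _ ≤ ∑ δ ∈ s, φ (unitVec δ) := Finset.sum_le_sum fun δ hδ => hs hδ
  have h2 : φ x ≤ ‖φ‖ := by
    have := φ.le_opNorm x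
    rw [Real.norm_eq_abs] at this
    have h3 : |φ x| ≤ ‖φ‖ * 1 := this.trans (by
      have := norm_nonneg φ
      nlinarith)
    have := le_abs_self (φ x)
    linarith
  have h4 : ‖φ‖ < (N : ℝ) * ε := (div_lt_iff₀ hε).mp hN
  linarith

lemma finite_abs_ge_clm_unitVec {Γ : Type*} [TopologicalSpace Γ] [DiscreteTopology Γ]
    (φ : C₀(Γ, ℝ) →L[ℝ] ℝ) {ε : ℝ} (hε : 0 < ε) :
    {δ : Γ | ε ≤ |φ (unitVec δ)|}.Finite := by
  have h1 := finite_ge_clm_unitVec φ hε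
  have h2 := finite_ge_clm_unitVec (-φ) hε
  refine (h1.union h2).subset ?_
  intro δ hδ
  simp only [Set.mem_setOf_eq] at hδ
  rcases le_abs.mp hδ with h | h
  · exact Or.inl h
  · exact Or.inr (by simpa using h)

lemma tendsto_clm_unitVec {Γ : Type*} [TopologicalSpace Γ] [DiscreteTopology Γ]
    (φ : C₀(Γ, ℝ) →L[ℝ] ℝ) (δ : ℕ → Γ) (hδ : Function.Injective δ) :
    Filter.Tendsto (fun k => φ (unitVec (δ k))) Filter.atTop (nhds 0) := by
  rw [NormedAddCommGroup.tendsto_nhds_zero]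
  intro ε hε
  have hfin : (δ ⁻¹' {d : Γ | ε ≤ |φ (unitVec d)|}).Finite :=
    (finite_abs_ge_clm_unitVec φ hε).preimage hδ.injOn
  rw [← Nat.cofinite_eq_atTop]
  refine Filter.eventually_cofinite.2 (hfin.subset ?_)
  intro k hk
  simp only [Set.mem_setOf_eq, not_lt, Real.norm_eq_abs] at hk
  exact hk

/-- Any sequence has a subsequence which is either constant or injective. -/
lemma exists_subseq_const_or_injective {α : Type*} (f : ℕ → α) :
    ∃ φ : ℕ → ℕ, StrictMono φ ∧
      ((∃ c, ∀ k, f (φ k) = c) ∨ Function.Injective fun k => f (φ k)) := by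
  classical
  by_cases h : ∃ c, {k | f k = c}.Infinite
  · obtain ⟨c, hc⟩ := h
    obtain ⟨φ, hφ, hφ2⟩ :=
      Filter.extraction_of_frequently_atTop (Nat.frequently_atTop_iff_infinite.2 hc)
    exact ⟨φ, hφ, Or.inl ⟨c, hφ2⟩⟩
  · push_neg at h
    set T : Set ℕ := {k | ∀ l < k, f l ≠ f k} with hT
    have hTinf : T.Infinite := by
      by_contra hfin
      rw [Set.not_infinite] at hfin
      have hrange : Set.range f ⊆ f '' T := by
        rintro _ ⟨k, rfl⟩
        have hex : ∃ l, f l = f k := ⟨k, rfl⟩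
        refine ⟨Nat.find hex, ?_, Nat.find_spec hex⟩
        intro l hl hfl
        exact Nat.find_min hex hl (hfl.trans (Nat.find_spec hex))
      have huniv : (Set.univ : Set ℕ) ⊆ ⋃ c ∈ f '' T, {k | f k = c} := by
        intro k _
        exact Set.mem_biUnion (hrange ⟨k, rfl⟩) rfl
      have hfin2 : (Set.univ : Set ℕ).Finite :=
        ((hfin.image f).biUnion fun c _ => (h c)).subset huniv
      exact Set.infinite_univ hfin2
    obtain ⟨φ, hφ, hφT⟩ :=
      Filter.extraction_of_frequently_atTop (Nat.frequently_atTop_iff_infinite.2 hTinf)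
    refine ⟨φ, hφ, Or.inr ?_⟩
    intro a b hab
    rcases lt_trichotomy a b with h' | h' | h'
    · exact absurd hab (hφT b (φ a) (hφ h'))
    · exact h'
    · exact absurd hab.symm (hφT a (φ b) (hφ h'))

/-- Any sequence of tuples has a subsequence in which every coordinate is constant or
injective. -/
lemma exists_subseq_all_const_or_injective {α : Type*} {n : ℕ} (t : ℕ → Fin n → α) :
    ∃ φ : ℕ → ℕ, StrictMono φ ∧ ∀ i : Fin n,
      (∃ c, ∀ k, t (φ k) i = c) ∨ Function.Injective fun k => t (φ k) i := by
  suffices h : ∀ l : List (Fin n), ∃ φ : ℕ → ℕ, StrictMono φ ∧ ∀ i ∈ l,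
      (∃ c, ∀ k, t (φ k) i = c) ∨ Function.Injective fun k => t (φ k) i by
    obtain ⟨φ, h1, h2⟩ := h (List.finRange n)
    exact ⟨φ, h1, fun i => h2 i (List.mem_finRange i)⟩
  intro l
  induction l with
  | nil => exact ⟨id, strictMono_id, by simp⟩
  | cons i l ih =>
    obtain ⟨φ, hφ, hl⟩ := ih
    obtain ⟨ψ, hψ, hi⟩ := exists_subseq_const_or_injective (fun k => t (φ k) i)
    refine ⟨φ ∘ ψ, hφ.comp hψ, ?_⟩
    intro j hj
    rcases List.mem_cons.mp hj with rfl | hj'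
    · rcases hi with ⟨c, hc⟩ | hinj
      · exact Or.inl ⟨c, hc⟩
      · exact Or.inr hinj
    · rcases hl j hj' with ⟨c, hc⟩ | hinj
      · exact Or.inl ⟨c, fun k => hc (ψ k)⟩
      · exact Or.inr (hinj.comp hψ.injective)

/-- Let `Γ` be an infinite cardinal of uncountable cofinality and `M` a
weakly sequentially continuous symmetric continuous `n`-linear form on `c₀(Γ)`. Then `M` is
countably supported: there is a countable `A ⊆ Γ` with `M (e γ₁, …, e γₙ) = 0` whenever
`{γ₁, …, γₙ} ⊄ A`. -/
theorem wsc_symmetric_multilinear_form_on_c0_countably_supported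
    (Γ : Type*) [TopologicalSpace Γ] [DiscreteTopology Γ] [Infinite Γ]
    (hcof : Cardinal.aleph0 < (Cardinal.mk Γ).ord.cof)
    (n : ℕ)
    (M : ContinuousMultilinearMap ℝ (fun _ : Fin n => C₀(Γ, ℝ)) ℝ)
    (hsymm : ∀ (σ : Equiv.Perm (Fin n)) (v : Fin n → C₀(Γ, ℝ)), M (v ∘ σ) = M v)
    (hwsc : ∀ (x : ℕ → Fin n → C₀(Γ, ℝ)) (y : Fin n → C₀(Γ, ℝ)),
      (∀ (i : Fin n) (φ : C₀(Γ, ℝ) →L[ℝ] ℝ),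
        Filter.Tendsto (fun k => φ (x k i)) Filter.atTop (nhds (φ (y i)))) →
      Filter.Tendsto (fun k => M (x k)) Filter.atTop (nhds (M y))) :
    ∃ A : Set Γ, A.Countable ∧
      ∀ γ : Fin n → Γ, ¬ (Set.range γ ⊆ A) → M (fun i => unitVec (γ i)) = 0 := by
  classical
  -- Key finiteness: for every `ε > 0` the set of `γ` appearing in some tuple of value `≥ ε`
  -- is finite.
  have key : ∀ ε : ℝ, 0 < ε →
      {γ : Γ | ∃ v : Fin n → Γ, γ ∈ Set.range v ∧
        ε ≤ |M (fun i => unitVec (v i))|}.Finite := by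
    intro ε hε
    by_contra hinf
    replace hinf : {γ : Γ | ∃ v : Fin n → Γ, γ ∈ Set.range v ∧
        ε ≤ |M (fun i => unitVec (v i))|}.Infinite := hinf
    set e := hinf.natEmbedding with he
    choose v hv1 hv2 using fun k : ℕ => (e k).2
    obtain ⟨φ, hφ, hall⟩ := exists_subseq_all_const_or_injective v
    by_cases hexist : ∃ i : Fin n, Function.Injective fun k => v (φ k) i
    · obtain ⟨i0, hi0⟩ := hexist
      set x : ℕ → Fin n → C₀(Γ, ℝ) := fun k i => unitVec (v (φ k) i) with hxdef
      set y : Fin n → C₀(Γ, ℝ) := fun i =>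
        if Function.Injective fun k => v (φ k) i then 0 else unitVec (v (φ 0) i) with hydef
      have hconv : ∀ (i : Fin n) (ψ : C₀(Γ, ℝ) →L[ℝ] ℝ),
          Filter.Tendsto (fun k => ψ (x k i)) Filter.atTop (nhds (ψ (y i))) := by
        intro i ψ
        by_cases h : Function.Injective fun k => v (φ k) i
        · have hy : y i = 0 := by rw [hydef]; simp [h]
          rw [hy, map_zero]
          exact tendsto_clm_unitVec ψ _ h
        · obtain ⟨c, hc⟩ := (hall i).resolve_right h
          have hy : y i = unitVec c := by rw [hydef]; simp [h, hc 0]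
          have hx : ∀ k, x k i = unitVec c := fun k => by rw [hxdef]; simp [hc k]
          simp only [hx, hy]
          exact tendsto_const_nhds
      have hlim := hwsc x y hconv
      have hy0 : M y = 0 := by
        refine M.map_coord_zero i0 ?_
        rw [hydef]; simp [hi0]
      rw [hy0] at hlim
      rw [NormedAddCommGroup.tendsto_nhds_zero] at hlim
      obtain ⟨k, hk⟩ := (hlim ε hε).exists
      have := hv2 (φ k)
      rw [Real.norm_eq_abs] at hk
      exact absurd this (not_le.mpr hk)
    · push_neg at hexist
      have hconst : ∀ i : Fin n, ∃ c, ∀ k, v (φ k) i = c :=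
        fun i => (hall i).resolve_right (hexist i)
      choose c hc using hconst
      -- all tuples in the subsequence are equal to `c`, but they contain infinitely many
      -- distinct elements: contradiction.
      have hmem : ∀ k : ℕ, ((e (φ k) : Γ)) ∈ Set.range c := by
        intro k
        obtain ⟨i, hi⟩ := hv1 (φ k)
        exact ⟨i, by rw [← hc i k, hi]⟩
      have hinj : Function.Injective fun k => (e (φ k) : Γ) :=
        Subtype.val_injective.comp (e.injective.comp hφ.injective)
      exact Set.not_infinite.mpr (Set.finite_range c)
        (Set.infinite_of_injective_forall_mem (f := fun k => (e (φ k) : Γ)) hinj hmem)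
  -- The support set.
  set A : Set Γ :=
    {γ : Γ | ∃ v : Fin n → Γ, γ ∈ Set.range v ∧ M (fun i => unitVec (v i)) ≠ 0} with hA
  refine ⟨A, ?_, ?_⟩
  · -- countability
    have hsub : A ⊆ ⋃ j : ℕ, {γ : Γ | ∃ v : Fin n → Γ, γ ∈ Set.range v ∧
        1 / (j + 1 : ℝ) ≤ |M (fun i => unitVec (v i))|} := by
      rintro γ ⟨v, hγv, hMv⟩
      have habs : 0 < |M (fun i => unitVec (v i))| := abs_pos.mpr hMv
      obtain ⟨j, hj⟩ := exists_nat_one_div_lt habs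
      exact Set.mem_iUnion.2 ⟨j, v, hγv, le_of_lt hj⟩
    refine Set.Countable.mono hsub ?_
    refine Set.countable_iUnion fun j => ?_
    exact (key (1 / (j + 1 : ℝ)) (by positivity)).countable
  · intro γ hγ
    by_contra hM
    refine hγ ?_
    rintro g ⟨i, rfl⟩
    exact ⟨γ, ⟨i, rfl⟩, hM⟩
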